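/- arXiv:math/0008178 — 3 statements merged into one kernel-verified Lean document; each statement's English description precedes it below -/
import Mathlib

section
/- Let G be a topological group acting continuously on a Hausdorff topological space M, let x ∈ M with stabilizer H := G_x, and let Σ ∋ x be a topological slice at x: an H-invariant subset such that G·Σ is open in M and the natural map (G × Σ)/H → G·Σ, [g,s] ↦ g·s, is a homeomorphism. Then: (i) for every m ∈ Σ, the G-stabilizer G_m is contained in H, so G_m = H_m; and (ii) for every H-invariant subset Z ⊆ Σ, the map Z/H → (G·Z)/G induced by the inclusion Z ↪ G·Z is a homeomorphism, which for every subgroup L of G carries the image of Z ∩ M_{(L)} in Z/H onto the image of (G·Z) ∩ M_{(L)} in (G·Z)/G (so it is an isomorphism of spaces partitioned by orbit types). -/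
section Slice

variable (G M : Type) [Group G] [TopologicalSpace G] [IsTopologicalGroup G]
  [TopologicalSpace M] [T2Space M] [MulAction G M] [ContinuousSMul G M]

/-- The saturation `G · Z` of a subset `Z ⊆ M`. -/
def satur (Z : Set M) : Set M := {m | ∃ g : G, ∃ z ∈ Z, g • z = m}

/-- The relation on `G × Σ` whose classes are the orbits of the `H`-action
`h • (g, s) = (g h⁻¹, h • s)`, where `H = G_x` is the stabilizer of `x`. -/
def sliceRel (x : M) (Sl : Set M) (p q : G × ↥Sl) : Prop :=
  ∃ h : ↥(MulAction.stabilizer G x),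
    q.1 = p.1 * (h : G)⁻¹ ∧ (q.2 : M) = (h : G) • (p.2 : M)

/-- The orbit relation for the `H = G_x`-action on an `H`-invariant subset `Z`. -/
def hOrbRel (x : M) (Z : Set M) (a b : ↥Z) : Prop :=
  ∃ h : ↥(MulAction.stabilizer G x), (h : G) • a.1 = b.1

/-- The orbit relation for the `G`-action on a `G`-invariant subset `A`. -/
def gOrbRel (A : Set M) (a b : ↥A) : Prop := ∃ g : G, g • a.1 = b.1

/-- The set `M_{(L)}` of points of `M` of orbit type `(L)`: those whose `G`-stabilizer
is conjugate to `L` in `G`. -/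
def orbitTypeSet (L : Subgroup G) : Set M :=
  {m | ∃ g : G, ∀ k : G, k ∈ MulAction.stabilizer G m ↔ g⁻¹ * k * g ∈ L}

end Slice

open Topology

/-- Let `G` be a topological group acting continuously on a Hausdorff
space `M`, let `x ∈ M` with stabilizer `H = G_x`, and let `Σ ∋ x` be a topological
slice at `x`: an `H`-invariant subset such that `G·Σ` is open in `M` and the natural
map `(G × Σ)/H → G·Σ`, `[g,s] ↦ g·s`, is a homeomorphism.  Then:
(i) for every `m ∈ Σ` the `G`-stabilizer `G_m` is contained in `H` (so `G_m = H_m`);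
(ii) for every `H`-invariant subset `Z ⊆ Σ`, the map `Z/H → (G·Z)/G` induced by the
inclusion `Z ↪ G·Z` is a homeomorphism which, for every subgroup `L ≤ G`, carries the
image of `Z ∩ M_{(L)}` in `Z/H` onto the image of `(G·Z) ∩ M_{(L)}` in `(G·Z)/G` (so it
is an isomorphism of spaces partitioned by orbit types). -/
theorem slice_quotient_theorem
    (G M : Type) [Group G] [TopologicalSpace G] [IsTopologicalGroup G]
    [TopologicalSpace M] [T2Space M] [MulAction G M] [ContinuousSMul G M]
    (x : M) (Sl : Set M) (hx : x ∈ Sl)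
    (hinv : ∀ h ∈ MulAction.stabilizer G x, ∀ s ∈ Sl, h • s ∈ Sl)
    (hopen : IsOpen (satur G M Sl))
    (hslice : ∃ f : Quot (sliceRel G M x Sl) ≃ₜ ↥(satur G M Sl),
      ∀ p : G × ↥Sl, (f (Quot.mk _ p) : M) = p.1 • (p.2 : M)) :
    -- (i) stabilizers of points of the slice are contained in `H = G_x`
    (∀ m ∈ Sl, MulAction.stabilizer G m ≤ MulAction.stabilizer G x) ∧
    -- (ii) for every `H`-invariant `Z ⊆ Σ`, `Z/H ≅ (G·Z)/G` as partitioned spaces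
    (∀ Z : Set M, Z ⊆ Sl →
      (∀ h ∈ MulAction.stabilizer G x, ∀ z ∈ Z, h • z ∈ Z) →
      ∃ φ : Quot (hOrbRel G M x Z) ≃ₜ Quot (gOrbRel G M (satur G M Z)),
        (∀ (z : ↥Z) (m : ↥(satur G M Z)), (m : M) = (z : M) →
          φ (Quot.mk _ z) = Quot.mk _ m) ∧
        ∀ L : Subgroup G,
          φ '' (Quot.mk (hOrbRel G M x Z) ''
              {z : ↥Z | z.1 ∈ orbitTypeSet G M L}) =
            Quot.mk (gOrbRel G M (satur G M Z)) ''
              {m : ↥(satur G M Z) | m.1 ∈ orbitTypeSet G M L}) := by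
  obtain ⟨f, hf⟩ := hslice
  have heqv : Equivalence (sliceRel G M x Sl) := by
    constructor
    · intro p; exact ⟨1, by simp, by simp⟩
    · rintro p q ⟨h, h1, h2⟩
      refine ⟨h⁻¹, ?_, ?_⟩
      · simp [h1, mul_assoc]
      · simp [h2, smul_smul]
    · rintro p q r ⟨h, h1, h2⟩ ⟨h', h1', h2'⟩
      refine ⟨h' * h, ?_, ?_⟩
      · simp [h1', h1, mul_assoc]
      · simp [h2', h2, smul_smul]
  have key : ∀ (g : G) (s s' : M), s ∈ Sl → s' ∈ Sl → g • s = s' →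
      g ∈ MulAction.stabilizer G x := by
    intro g s s' hs hs' hgs
    have h1 : f (Quot.mk _ ((g, ⟨s, hs⟩) : G × ↥Sl)) =
        f (Quot.mk _ ((1, ⟨s', hs'⟩) : G × ↥Sl)) := by
      apply Subtype.ext
      rw [hf, hf]
      simpa using hgs
    obtain ⟨h, hh1, hh2⟩ := heqv.eqvGen_iff.mp (Quot.eqvGen_exact (f.injective h1))
    have hg : g = (h : G) := mul_inv_eq_one.mp hh1.symm
    exact hg ▸ h.2
  refine ⟨fun m hm g hg => key g m m hm hm hg, ?_⟩
  intro Z hZS hZinv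
  have memA : ∀ z : ↥Z, z.1 ∈ satur G M Z := fun z => ⟨1, z.1, z.2, one_smul _ _⟩
  set A := satur G M Z with hA
  -- forward map
  have toSound : ∀ a b : ↥Z, hOrbRel G M x Z a b →
      (Quot.mk (gOrbRel G M A) ⟨a.1, memA a⟩ : Quot (gOrbRel G M A)) =
        Quot.mk (gOrbRel G M A) ⟨b.1, memA b⟩ := by
    rintro a b ⟨h, hh⟩
    exact Quot.sound ⟨(h : G), hh⟩
  set toF : Quot (hOrbRel G M x Z) → Quot (gOrbRel G M A) :=
    Quot.lift (fun z => Quot.mk _ ⟨z.1, memA z⟩) toSound with htoF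
  -- representative choice
  have repP : ∀ m : ↥A, ∃ p : G × ↥Z, p.1 • p.2.1 = m.1 := by
    rintro ⟨m, g, z, hz, hgz⟩; exact ⟨(g, ⟨z, hz⟩), hgz⟩
  set rep : ↥A → G × ↥Z := fun m => (repP m).choose with hrepdef
  have hrep : ∀ m, (rep m).1 • (rep m).2.1 = m.1 := fun m => (repP m).choose_spec
  have keyZ : ∀ (g : G) (z z' : ↥Z), g • z.1 = z'.1 → hOrbRel G M x Z z z' :=
    fun g z z' h => ⟨⟨g, key g z.1 z'.1 (hZS z.2) (hZS z'.2) h⟩, h⟩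
  set invFun0 : ↥A → Quot (hOrbRel G M x Z) := fun m => Quot.mk _ (rep m).2
    with hinvFun0
  have invSpec : ∀ (g : G) (z : ↥Z) (m : ↥A), g • z.1 = m.1 →
      invFun0 m = Quot.mk _ z := by
    intro g z m hg
    have hz' : ((rep m).1⁻¹ * g) • z.1 = (rep m).2.1 := by
      rw [mul_smul, hg, ← hrep m, inv_smul_smul]
    exact (Quot.sound (keyZ _ z (rep m).2 hz')).symm
  have invSound : ∀ a b : ↥A, gOrbRel G M A a b → invFun0 a = invFun0 b := by
    rintro a b ⟨g, hg⟩
    have h1 : (g * (rep a).1) • (rep a).2.1 = b.1 := by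
      rw [mul_smul, hrep a, hg]
    have h2 := invSpec (g * (rep a).1) (rep a).2 b h1
    rw [h2]
  set invF : Quot (gOrbRel G M A) → Quot (hOrbRel G M x Z) :=
    Quot.lift invFun0 invSound with hinvF
  have left_inv : Function.LeftInverse invF toF := by
    intro q
    induction q using Quot.ind with
    | _ z =>
      rw [htoF, hinvF]
      exact invSpec 1 z ⟨z.1, memA z⟩ (one_smul _ _)
  have right_inv : Function.RightInverse invF toF := by
    intro q
    induction q using Quot.ind with
    | _ m =>
      rw [htoF, hinvF]
      exact Quot.sound ⟨(rep m).1, hrep m⟩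
  -- continuity of toF
  have toFc : Continuous toF := by
    apply continuous_quot_lift
    exact continuous_quot_mk.comp (continuous_subtype_val.subtype_mk _)
  -- the orbit map π : G × Z → G·Z
  set π : G × ↥Z → ↥A := fun p => ⟨p.1 • p.2.1, ⟨p.1, p.2.1, p.2.2, rfl⟩⟩ with hπ
  have hπc : Continuous π :=
    (continuous_fst.smul (continuous_subtype_val.comp continuous_snd)).subtype_mk _
  have hπs : Function.Surjective π := fun m => ⟨rep m, Subtype.ext (hrep m)⟩
  have hπo : IsOpenMap π := by
    intro U hU
    have hind : IsInducing (fun p : G × ↥Z => (p.1, p.2.1)) :=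
      IsInducing.id.prodMap IsInducing.subtypeVal
    rw [hind.isOpen_iff] at hU
    obtain ⟨W, hW, rfl⟩ := hU
    set W' : Set (G × ↥Sl) := (fun p : G × ↥Sl => (p.1, p.2.1)) ⁻¹' W with hW'
    have hW'o : IsOpen W' :=
      hW.preimage (continuous_fst.prodMk (continuous_subtype_val.comp continuous_snd))
    have hQ : IsOpen (Quot.mk (sliceRel G M x Sl) '' W') := by
      rw [← isQuotientMap_quot_mk.isOpen_preimage]
      have hset : Quot.mk (sliceRel G M x Sl) ⁻¹' (Quot.mk _ '' W') =
          ⋃ h : ↥(MulAction.stabilizer G x),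
            (fun q : G × ↥Sl => (q.1 * (h : G), (h : G)⁻¹ • (q.2 : M))) ⁻¹' W := by
        ext q
        simp only [Set.mem_preimage, Set.mem_image, Set.mem_iUnion]
        constructor
        · rintro ⟨p, hpW, hpq⟩
          obtain ⟨h, h1, h2⟩ := heqv.eqvGen_iff.mp (Quot.eqvGen_exact hpq)
          refine ⟨h, ?_⟩
          have e1 : q.1 * (h : G) = p.1 := by rw [h1]; simp [mul_assoc]
          have e2 : (h : G)⁻¹ • (q.2 : M) = (p.2 : M) := by rw [h2]; simp
          rw [e1, e2]; exact hpW
        · rintro ⟨h, hqW⟩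
          have hmem : (h : G)⁻¹ • (q.2 : M) ∈ Sl :=
            hinv _ ((MulAction.stabilizer G x).inv_mem h.2) _ q.2.2
          refine ⟨(q.1 * (h : G), ⟨(h : G)⁻¹ • (q.2 : M), hmem⟩), hqW, ?_⟩
          exact Quot.sound ⟨h, by simp [mul_assoc], by simp⟩
      rw [hset]
      exact isOpen_iUnion fun h => hW.preimage
        ((continuous_fst.mul continuous_const).prodMk
          (continuous_const.smul (continuous_subtype_val.comp continuous_snd)))
    have hO : IsOpen (Subtype.val '' (⇑f '' (Quot.mk (sliceRel G M x Sl) '' W'))) :=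
      hopen.isOpenMap_subtype_val _ (f.isOpenMap _ hQ)
    have himg : π '' ((fun p : G × ↥Z => (p.1, p.2.1)) ⁻¹' W) =
        Subtype.val ⁻¹' (Subtype.val '' (⇑f '' (Quot.mk (sliceRel G M x Sl) '' W'))) := by
      ext m
      constructor
      · rintro ⟨p, hpW, rfl⟩
        have hp2 : (p.2 : M) ∈ Sl := hZS p.2.2
        refine ⟨f (Quot.mk _ ((p.1, ⟨p.2.1, hp2⟩) : G × ↥Sl)),
          ⟨Quot.mk _ ((p.1, ⟨p.2.1, hp2⟩) : G × ↥Sl),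
            ⟨(p.1, ⟨p.2.1, hp2⟩), hpW, rfl⟩, rfl⟩, ?_⟩
        rw [hf]
      · rintro ⟨y, ⟨q, ⟨w, hwW, rfl⟩, rfl⟩, hym⟩
        -- hym : (f (Quot.mk _ w)).1 = m.1
        have hwm : w.1 • (w.2 : M) = m.1 := by rw [← hf]; exact hym
        obtain ⟨g, z, hz, hgz⟩ := m.2
        have hzw : (w.1⁻¹ * g) • z = (w.2 : M) := by
          rw [mul_smul, hgz, ← hwm, inv_smul_smul]
        have hH : (w.1⁻¹ * g) ∈ MulAction.stabilizer G x :=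
          key _ z (w.2 : M) (hZS hz) w.2.2 hzw
        have hw2Z : (w.2 : M) ∈ Z := hzw ▸ hZinv _ hH z hz
        refine ⟨(w.1, ⟨(w.2 : M), hw2Z⟩), hwW, ?_⟩
        exact Subtype.ext hwm
    rw [himg]
    exact hO.preimage continuous_subtype_val
  have hπq : IsQuotientMap π := hπo.isQuotientMap hπc hπs
  have invFc : Continuous invF := by
    apply continuous_quot_lift
    rw [hπq.continuous_iff]
    have : invFun0 ∘ π = fun p : G × ↥Z => Quot.mk (hOrbRel G M x Z) p.2 := by
      funext p
      exact invSpec p.1 p.2 (π p) rfl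
    rw [this]
    exact continuous_quot_mk.comp continuous_snd
  refine ⟨⟨⟨toF, invF, left_inv, right_inv⟩, toFc, invFc⟩, ?_, ?_⟩
  · intro z m hm
    exact congrArg (Quot.mk _) (Subtype.ext hm.symm)
  · -- orbit types
    have stabConj : ∀ (g k : G) (m : M),
        k ∈ MulAction.stabilizer G (g • m) ↔ g⁻¹ * k * g ∈ MulAction.stabilizer G m := by
      intro g k m
      simp only [MulAction.mem_stabilizer_iff, mul_smul]
      constructor
      · intro hk; rw [hk, inv_smul_smul]
      · intro hk
        have := congrArg (g • ·) hk
        simpa [smul_smul] using this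
    have orbitSmul : ∀ (L : Subgroup G) (g : G) (m : M),
        m ∈ orbitTypeSet G M L → g • m ∈ orbitTypeSet G M L := by
      rintro L g m ⟨g₀, hg₀⟩
      refine ⟨g * g₀, fun k => ?_⟩
      rw [stabConj, hg₀ (g⁻¹ * k * g)]
      have he : g₀⁻¹ * (g⁻¹ * k * g) * g₀ = (g * g₀)⁻¹ * k * (g * g₀) := by group
      rw [he]
    intro L
    ext q
    simp only [Set.mem_image, Set.mem_setOf_eq]
    constructor
    · rintro ⟨_, ⟨z, hz, rfl⟩, rfl⟩
      exact ⟨⟨z.1, memA z⟩, hz, rfl⟩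
    · rintro ⟨m, hm, rfl⟩
      obtain ⟨g, z, hz, hgz⟩ := m.2
      have hzL : z ∈ orbitTypeSet G M L := by
        have := orbitSmul L g⁻¹ m.1 hm
        rwa [← hgz, inv_smul_smul] at this
      refine ⟨Quot.mk _ (⟨z, hz⟩ : ↥Z), ⟨⟨z, hz⟩, hzL, rfl⟩, ?_⟩
      exact Quot.sound ⟨g, hgz⟩
end

section
/- Let G be a topological group, H a compact subgroup of G, and let G act continuously and linearly on a finite-dimensional real vector space E with an H-invariant direct sum decomposition E = A ⊕ B. Let W be a topological space with a continuous H-action and Φ : W → B a continuous H-equivariant map. Form the associated space Y := (G × (A × W))/H, where H acts by h·(g, a, w) = (g h^{-1}, h·a, h·w) and G acts by left multiplication on the first factor, and define F : Y → E by F([g, a, w]) = g·(a + Φ(w)). Then F is well defined and G-equivariant, F^{-1}(0) = {[g, 0, w] : g ∈ G, w ∈ W, Φ(w) = 0}, the map w ↦ [1, 0, w] induces a homeomorphism Φ^{-1}(0)/H → F^{-1}(0)/G, and for every w ∈ Φ^{-1}(0) the G-stabilizer of [1, 0, w] equals the H-stabilizer of w (so the homeomorphism matches orbit-type pieces). -/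
set_option linter.unusedSectionVars false


section AssocBundle

variable (G : Type) [Group G] [TopologicalSpace G] [IsTopologicalGroup G]
  (H : Subgroup G)
  (E : Type) [NormedAddCommGroup E] [NormedSpace ℝ E] [FiniteDimensional ℝ E]
  [DistribMulAction G E] [SMulCommClass G ℝ E] [ContinuousSMul G E]
  (A : Submodule ℝ E)
  (W : Type) [TopologicalSpace W] [MulAction ↥H W] [ContinuousSMul ↥H W]
  (Φ : W → E)

/-- The relation on `G × (A × W)` whose classes are the orbits of the `H`-action
`h • (g, a, w) = (g h⁻¹, h • a, h • w)`; its quotient is the associated space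
`Y = (G × (A × W))/H`. -/
def assocRel (p q : G × (↥A × W)) : Prop :=
  ∃ h : ↥H, q.1 = p.1 * (h : G)⁻¹ ∧
    (q.2.1 : E) = (h : G) • (p.2.1 : E) ∧ q.2.2 = h • p.2.2

/-- The associated space `Y = (G × (A × W))/H`, with the quotient topology. -/
def AssocY : Type := Quot (assocRel G H E A W)

instance : TopologicalSpace (AssocY G H E A W) :=
  inferInstanceAs (TopologicalSpace (Quot _))

/-- The map `G × (A × W) → E`, `(g, a, w) ↦ g • (a + Φ(w))`, inducing
`F : Y → E`, `F([g, a, w]) = g • (a + Φ(w))`. -/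
def Ftil (p : G × (↥A × W)) : E := p.1 • ((p.2.1 : E) + Φ p.2.2)

/-- The zero fiber `F⁻¹(0) ⊆ Y`. -/
def FZero : Set (AssocY G H E A W) :=
  {y | ∀ p : G × (↥A × W), y = Quot.mk (assocRel G H E A W) p → Ftil G E A W Φ p = 0}

/-- The orbit relation of the `G`-action `g • [a, η, w] = [g a, η, w]` on the zero
fiber `F⁻¹(0) ⊆ Y`. -/
def fzRel (a b : ↥(FZero G H E A W Φ)) : Prop :=
  ∃ g : G, ∃ p : G × (↥A × W),
    a.1 = Quot.mk (assocRel G H E A W) p ∧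
    b.1 = Quot.mk (assocRel G H E A W) (g * p.1, p.2)

/-- The zero level set `Φ⁻¹(0) ⊆ W`. -/
def PhiZero : Set W := {w | Φ w = 0}

/-- The orbit relation of the `H`-action on `Φ⁻¹(0)`. -/
def phizRel (a b : ↥(PhiZero E W Φ)) : Prop := ∃ h : ↥H, h • a.1 = b.1

end AssocBundle

section AuxProofs

variable {G : Type} [Group G] [TopologicalSpace G] [IsTopologicalGroup G]
  {H : Subgroup G}
  {E : Type} [NormedAddCommGroup E] [NormedSpace ℝ E] [FiniteDimensional ℝ E]
  [DistribMulAction G E] [SMulCommClass G ℝ E] [ContinuousSMul G E]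
  {A : Submodule ℝ E}
  {W : Type} [TopologicalSpace W] [MulAction ↥H W] [ContinuousSMul ↥H W]
  {Φ : W → E}

lemma aux_equiv : Equivalence (assocRel G H E A W) := by
  constructor
  · intro p
    exact ⟨1, by simp, by simp, by simp⟩
  · rintro p q ⟨h, h1, h2, h3⟩
    refine ⟨h⁻¹, ?_, ?_, ?_⟩
    · simp [h1, mul_assoc]
    · simp [h2]
    · simp [h3]
  · rintro p q r ⟨h, h1, h2, h3⟩ ⟨h', h1', h2', h3'⟩
    refine ⟨h' * h, ?_, ?_, ?_⟩
    · simp [h1', h1, mul_assoc]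
    · simp [h2', h2, mul_smul]
    · simp [h3', h3, mul_smul]

lemma aux_mk_eq {p q : G × (↥A × W)} :
    Quot.mk (assocRel G H E A W) p = Quot.mk (assocRel G H E A W) q ↔
      assocRel G H E A W p q := by
  rw [Quot.eq]
  exact Equivalence.eqvGen_iff aux_equiv

lemma aux_Ftil_wd (hΦeq : ∀ (h : ↥H) (w : W), Φ (h • w) = (h : G) • Φ w)
    {p q : G × (↥A × W)} (hpq : assocRel G H E A W p q) :
    Ftil G E A W Φ p = Ftil G E A W Φ q := by
  obtain ⟨h, h1, h2, h3⟩ := hpq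
  simp only [Ftil, h1, h2, h3, hΦeq]
  rw [← smul_add, smul_smul, inv_mul_cancel_right]

lemma aux_smul_eq_zero {g : G} {x : E} : g • x = 0 ↔ x = 0 := by
  constructor
  · intro h
    have := congrArg (fun y => g⁻¹ • y) h
    simpa using this
  · rintro rfl; simp

lemma aux_zero_iff {B : Submodule ℝ E} (hcompl : IsCompl A B)
    (hΦB : ∀ w : W, Φ w ∈ B) (p : G × (↥A × W)) :
    Ftil G E A W Φ p = 0 ↔ ((p.2.1 : E) = 0 ∧ Φ p.2.2 = 0) := by
  rw [Ftil, aux_smul_eq_zero]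
  constructor
  · intro h
    have ha : (p.2.1 : E) = -(Φ p.2.2) := eq_neg_of_add_eq_zero_left h
    have ha0 : (p.2.1 : E) = 0 := by
      refine Submodule.disjoint_def.mp hcompl.disjoint _ p.2.1.2 ?_
      rw [ha]; exact neg_mem (hΦB _)
    refine ⟨ha0, ?_⟩
    rw [ha0] at h; simpa using h
  · rintro ⟨h1, h2⟩; rw [h1, h2]; simp

lemma aux_mem_FZero (hΦeq : ∀ (h : ↥H) (w : W), Φ (h • w) = (h : G) • Φ w)
    {p : G × (↥A × W)} (hp : Ftil G E A W Φ p = 0) :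
    Quot.mk (assocRel G H E A W) p ∈ FZero G H E A W Φ := by
  intro q hq
  have hr : assocRel G H E A W p q := aux_mk_eq.mp hq
  rw [← aux_Ftil_wd hΦeq hr]
  exact hp

/-- The backward map on the zero fiber, defined by choosing a representative. -/
noncomputable def bwdFun {B : Submodule ℝ E} (hcompl : IsCompl A B)
    (hΦB : ∀ w : W, Φ w ∈ B) (y : ↥(FZero G H E A W Φ)) :
    Quot (phizRel G H E W Φ) :=
  Quot.mk _ ⟨(Classical.choose (Quot.exists_rep y.1)).2.2, by
    have hspec := Classical.choose_spec (Quot.exists_rep y.1)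
    have h0 : Ftil G E A W Φ (Classical.choose (Quot.exists_rep y.1)) = 0 :=
      y.2 _ hspec.symm
    exact ((aux_zero_iff hcompl hΦB _).mp h0).2⟩

lemma bwdFun_eq {B : Submodule ℝ E} (hcompl : IsCompl A B)
    (hΦB : ∀ w : W, Φ w ∈ B)
    (y : ↥(FZero G H E A W Φ)) (p : G × (↥A × W))
    (hp : y.1 = Quot.mk (assocRel G H E A W) p) (hw : Φ p.2.2 = 0) :
    bwdFun hcompl hΦB y = Quot.mk (phizRel G H E W Φ) ⟨p.2.2, hw⟩ := by
  have hspec := Classical.choose_spec (Quot.exists_rep y.1)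
  have hr : assocRel G H E A W (Classical.choose (Quot.exists_rep y.1)) p :=
    aux_mk_eq.mp (hspec.trans hp)
  obtain ⟨h, _, _, h3⟩ := hr
  exact Quot.sound ⟨h, h3.symm⟩

lemma bwdFun_continuous {B : Submodule ℝ E} (hHc : IsCompact (H : Set G))
    (hcompl : IsCompl A B) (hΦcont : Continuous Φ) (hΦB : ∀ w : W, Φ w ∈ B) :
    Continuous (bwdFun (G := G) (H := H) (A := A) (W := W) (Φ := Φ) hcompl hΦB) := by
  haveI : CompactSpace ↥H := isCompact_iff_compactSpace.mp hHc
  rw [continuous_def]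
  intro U hU
  have hpre : IsOpen (Quot.mk (phizRel G H E W Φ) ⁻¹' U) :=
    continuous_quot_mk.isOpen_preimage U hU
  obtain ⟨O, hO, hOeq⟩ := isOpen_induced_iff.mp hpre
  -- hOeq : Subtype.val ⁻¹' O = Quot.mk _ ⁻¹' U
  set C : Set W := PhiZero E W Φ ∩ Oᶜ with hC
  have hCclosed : IsClosed C := by
    refine IsClosed.inter ?_ hO.isClosed_compl
    have : PhiZero E W Φ = Φ ⁻¹' {0} := rfl
    rw [this]
    exact isClosed_singleton.preimage hΦcont
  set Sat : Set W := Prod.snd '' ((fun q : ↥H × W => q.1 • q.2) ⁻¹' C) with hSatdef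
  have hSatClosed : IsClosed Sat :=
    isClosedMap_snd_of_compactSpace _ (hCclosed.preimage continuous_smul)
  have hmemS : ∀ w : W, w ∉ Sat ↔ ∀ h : ↥H, h • w ∉ C := by
    intro w
    constructor
    · intro hw h hc
      exact hw ⟨(h, w), hc, rfl⟩
    · rintro hw ⟨⟨h, w'⟩, hc, rfl⟩
      exact hw h hc
  set Ntil : Set (G × (↥A × W)) := (fun p => p.2.2) ⁻¹' Satᶜ with hNtildef
  have hNtilOpen : IsOpen Ntil :=
    (hSatClosed.isOpen_compl).preimage (continuous_snd.comp continuous_snd)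
  set N : Set (Quot (assocRel G H E A W)) := Quot.mk (assocRel G H E A W) '' Ntil
    with hNdef
  have hsatN : Quot.mk (assocRel G H E A W) ⁻¹' N = Ntil := by
    ext p
    constructor
    · rintro ⟨p', hp', hmk⟩
      obtain ⟨h, _, _, h3⟩ := aux_mk_eq.mp hmk
      show p.2.2 ∉ Sat
      rw [hmemS]
      intro h' hc
      rw [h3] at hc
      rw [← mul_smul] at hc
      exact (hmemS p'.2.2).mp hp' (h' * h) hc
    · intro hp
      exact ⟨p, hp, rfl⟩
  have hNopen : IsOpen N := by
    rw [← isQuotientMap_quot_mk.isOpen_preimage, hsatN]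
    exact hNtilOpen
  have hpreeq : bwdFun (G := G) (H := H) (A := A) (W := W) (Φ := Φ) hcompl hΦB ⁻¹' U
      = Subtype.val ⁻¹' N := by
    ext y
    constructor
    · intro hy
      set p₀ := Classical.choose (Quot.exists_rep y.1) with hp₀
      have hspec : Quot.mk (assocRel G H E A W) p₀ = y.1 :=
        Classical.choose_spec (Quot.exists_rep y.1)
      have h0 : Ftil G E A W Φ p₀ = 0 := y.2 _ hspec.symm
      have hw0 : Φ p₀.2.2 = 0 := ((aux_zero_iff hcompl hΦB _).mp h0).2
      have hbw : bwdFun hcompl hΦB y = Quot.mk (phizRel G H E W Φ) ⟨p₀.2.2, hw0⟩ :=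
        bwdFun_eq hcompl hΦB y p₀ hspec.symm hw0
      have hy' : Quot.mk (phizRel G H E W Φ) ⟨p₀.2.2, hw0⟩ ∈ U := by
        rw [← hbw]; exact hy
      have hmem : p₀ ∈ Ntil := by
        show p₀.2.2 ∉ Sat
        rw [hmemS]
        intro h hc
        obtain ⟨hz, hno⟩ := hc
        have : Quot.mk (phizRel G H E W Φ) ⟨h • p₀.2.2, hz⟩
            = Quot.mk (phizRel G H E W Φ) ⟨p₀.2.2, hw0⟩ :=
          (Quot.sound ⟨h, rfl⟩).symm
        have hmemU : (⟨h • p₀.2.2, hz⟩ : ↥(PhiZero E W Φ)) ∈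
            Quot.mk (phizRel G H E W Φ) ⁻¹' U := by
          show Quot.mk (phizRel G H E W Φ) ⟨h • p₀.2.2, hz⟩ ∈ U
          rw [this]
          exact hy'
        rw [← hOeq] at hmemU
        exact hno hmemU
      exact ⟨p₀, hmem, hspec⟩
    · rintro ⟨p', hp', hmk⟩
      have h0 : Ftil G E A W Φ p' = 0 := y.2 _ hmk.symm
      have hw' : Φ p'.2.2 = 0 := ((aux_zero_iff hcompl hΦB _).mp h0).2
      have hbw : bwdFun hcompl hΦB y = Quot.mk (phizRel G H E W Φ) ⟨p'.2.2, hw'⟩ :=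
        bwdFun_eq hcompl hΦB y p' hmk.symm hw'
      have hnc : p'.2.2 ∉ C := by
        have := (hmemS p'.2.2).mp hp' 1
        rwa [one_smul] at this
      have hO' : p'.2.2 ∈ O := by
        by_contra hcon
        exact hnc ⟨hw', hcon⟩
      show bwdFun hcompl hΦB y ∈ U
      rw [hbw]
      have : (⟨p'.2.2, hw'⟩ : ↥(PhiZero E W Φ)) ∈ Subtype.val ⁻¹' O := hO'
      rw [hOeq] at this
      exact this
  rw [hpreeq]
  exact hNopen.preimage continuous_subtype_val

/-- The forward map `Φ⁻¹(0) → F⁻¹(0)/G`, `w ↦ [1, 0, w]`. -/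
def fwdFun0 (hΦeq : ∀ (h : ↥H) (w : W), Φ (h • w) = (h : G) • Φ w)
    (w : ↥(PhiZero E W Φ)) : Quot (fzRel G H E A W Φ) :=
  Quot.mk _ ⟨Quot.mk _ (1, ((0 : ↥A), w.1)), aux_mem_FZero hΦeq (by
    have hw : Φ w.1 = 0 := w.2
    simp [Ftil, hw])⟩

lemma fwdFun0_wd (hΦeq : ∀ (h : ↥H) (w : W), Φ (h • w) = (h : G) • Φ w)
    (w w' : ↥(PhiZero E W Φ)) (hww' : phizRel G H E W Φ w w') :
    fwdFun0 (A := A) hΦeq w = fwdFun0 (A := A) hΦeq w' := by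
  obtain ⟨h, hw⟩ := hww'
  have hmk : Quot.mk (assocRel G H E A W) (1, ((0 : ↥A), w.1))
      = Quot.mk (assocRel G H E A W) ((h : G)⁻¹, ((0 : ↥A), w'.1)) := by
    apply aux_mk_eq.mpr
    exact ⟨h, by simp, by simp, by simp [hw.symm]⟩
  have hmem := aux_mem_FZero (A := A) hΦeq (p := (1, ((0 : ↥A), w.1))) (by
    have hw0 : Φ w.1 = 0 := w.2
    simp [Ftil, hw0])
  have hmem' : Quot.mk (assocRel G H E A W) ((h : G)⁻¹, ((0 : ↥A), w'.1))
      ∈ FZero G H E A W Φ := hmk ▸ hmem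
  have step1 : fwdFun0 (A := A) hΦeq w
      = Quot.mk (fzRel G H E A W Φ) ⟨_, hmem'⟩ := by
    apply congrArg (Quot.mk _)
    exact Subtype.ext hmk
  rw [step1]
  apply Quot.sound
  refine ⟨(h : G), ((h : G)⁻¹, ((0 : ↥A), w'.1)), rfl, ?_⟩
  show Quot.mk (assocRel G H E A W) (1, ((0 : ↥A), w'.1))
      = Quot.mk (assocRel G H E A W) ((h : G) * (h : G)⁻¹, ((0 : ↥A), w'.1))
  rw [mul_inv_cancel]

end AuxProofs


/-- Let `G` be a topological group, `H` a compact subgroup, `E` a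
finite-dimensional real vector space with a continuous linear `G`-action and an
`H`-invariant direct sum decomposition `E = A ⊕ B`, `W` a topological space with a
continuous `H`-action and `Φ : W → B` a continuous `H`-equivariant map.  Form
`Y = (G × (A × W))/H` and `F : Y → E`, `F([g, a, w]) = g • (a + Φ(w))`.  Then `F` is
well defined and `G`-equivariant, `F⁻¹(0) = {[g, 0, w] : Φ(w) = 0}`, the map
`w ↦ [1, 0, w]` induces a homeomorphism `Φ⁻¹(0)/H → F⁻¹(0)/G`, and for every
`w ∈ Φ⁻¹(0)` the `G`-stabilizer of `[1, 0, w]` equals the `H`-stabilizer of `w` (so the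
homeomorphism matches orbit-type pieces). -/
theorem associated_bundle_zero_fiber_quotient
    (G : Type) [Group G] [TopologicalSpace G] [IsTopologicalGroup G]
    (H : Subgroup G) (hHc : IsCompact (H : Set G))
    (E : Type) [NormedAddCommGroup E] [NormedSpace ℝ E] [FiniteDimensional ℝ E]
    [DistribMulAction G E] [SMulCommClass G ℝ E] [ContinuousSMul G E]
    (A B : Submodule ℝ E)
    (hAinv : ∀ h ∈ H, ∀ a ∈ A, h • a ∈ A)
    (hBinv : ∀ h ∈ H, ∀ b ∈ B, h • b ∈ B)
    (hcompl : IsCompl A B)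
    (W : Type) [TopologicalSpace W] [MulAction ↥H W] [ContinuousSMul ↥H W]
    (Φ : W → E) (hΦcont : Continuous Φ) (hΦB : ∀ w : W, Φ w ∈ B)
    (hΦeq : ∀ (h : ↥H) (w : W), Φ (h • w) = (h : G) • Φ w) :
    -- `F` is well defined on `Y = (G × (A × W))/H`
    (∀ p q : G × (↥A × W), assocRel G H E A W p q → Ftil G E A W Φ p = Ftil G E A W Φ q) ∧
    -- `F` is `G`-equivariant
    (∀ (g : G) (p : G × (↥A × W)), Ftil G E A W Φ (g * p.1, p.2) = g • Ftil G E A W Φ p) ∧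
    -- `F⁻¹(0) = {[g, 0, w] : Φ(w) = 0}`
    (∀ p : G × (↥A × W), Ftil G E A W Φ p = 0 ↔ ((p.2.1 : E) = 0 ∧ Φ p.2.2 = 0)) ∧
    -- `w ↦ [1, 0, w]` induces a homeomorphism `Φ⁻¹(0)/H ≃ₜ F⁻¹(0)/G`
    (∃ φ : Quot (phizRel G H E W Φ) ≃ₜ Quot (fzRel G H E A W Φ),
      ∀ (w : ↥(PhiZero E W Φ)) (y : ↥(FZero G H E A W Φ)),
        y.1 = Quot.mk (assocRel G H E A W) (1, ((0 : ↥A), w.1)) →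
          φ (Quot.mk _ w) = Quot.mk _ y) ∧
    -- the `G`-stabilizer of `[1, 0, w]` equals the `H`-stabilizer of `w`
    (∀ w : W, Φ w = 0 → ∀ g : G,
      Quot.mk (assocRel G H E A W) (g, ((0 : ↥A), w)) =
        Quot.mk (assocRel G H E A W) (1, ((0 : ↥A), w)) ↔
      ∃ h : ↥H, (h : G) = g ∧ h • w = w) := by
  refine ⟨fun p q hpq => aux_Ftil_wd hΦeq hpq, ?_, aux_zero_iff hcompl hΦB, ?_, ?_⟩
  · intro g p
    simp only [Ftil]
    rw [mul_smul]
  · -- the homeomorphism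
    have hbwdwd : ∀ y y' : ↥(FZero G H E A W Φ), fzRel G H E A W Φ y y' →
        bwdFun hcompl hΦB y = bwdFun hcompl hΦB y' := by
      rintro y y' ⟨g, p, h1, h2⟩
      have hw : Φ p.2.2 = 0 := ((aux_zero_iff hcompl hΦB p).mp (y.2 p h1)).2
      rw [bwdFun_eq hcompl hΦB y p h1 hw,
        bwdFun_eq hcompl hΦB y' (g * p.1, p.2) h2 hw]
    refine ⟨{ toFun := Quot.lift (fwdFun0 (A := A) hΦeq) (fwdFun0_wd hΦeq)
              invFun := Quot.lift (bwdFun hcompl hΦB) hbwdwd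
              left_inv := ?_
              right_inv := ?_
              continuous_toFun := ?_
              continuous_invFun := ?_ }, ?_⟩
    · intro x
      induction x using Quot.ind
      rename_i w
      show Quot.lift (bwdFun hcompl hΦB) hbwdwd
          (Quot.lift (fwdFun0 (A := A) hΦeq) (fwdFun0_wd hΦeq) (Quot.mk _ w))
          = Quot.mk _ w
      have h1 : Quot.lift (bwdFun hcompl hΦB) hbwdwd
          (Quot.lift (fwdFun0 (A := A) hΦeq) (fwdFun0_wd hΦeq) (Quot.mk _ w))
          = Quot.mk (phizRel G H E W Φ) ⟨w.1, w.2⟩ :=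
        bwdFun_eq hcompl hΦB _ (1, ((0 : ↥A), w.1)) rfl w.2
      rw [h1]
    · intro x
      induction x using Quot.ind
      rename_i y
      obtain ⟨p, hp⟩ := Quot.exists_rep y.1
      have h0 : Ftil G E A W Φ p = 0 := y.2 p hp.symm
      obtain ⟨ha, hw⟩ := (aux_zero_iff hcompl hΦB p).mp h0
      show Quot.lift (fwdFun0 (A := A) hΦeq) (fwdFun0_wd hΦeq)
          (Quot.lift (bwdFun hcompl hΦB) hbwdwd (Quot.mk _ y)) = Quot.mk _ y
      have h1 : Quot.lift (bwdFun hcompl hΦB) hbwdwd (Quot.mk _ y)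
          = Quot.mk (phizRel G H E W Φ) ⟨p.2.2, hw⟩ :=
        bwdFun_eq hcompl hΦB y p hp.symm hw
      rw [h1]
      show fwdFun0 (A := A) hΦeq ⟨p.2.2, hw⟩ = Quot.mk _ y
      apply Quot.sound
      refine ⟨p.1, (1, ((0 : ↥A), p.2.2)), rfl, ?_⟩
      show y.1 = Quot.mk (assocRel G H E A W) (p.1 * 1, ((0 : ↥A), p.2.2))
      have hpz : ((0 : ↥A), p.2.2) = p.2 := by
        have hz : p.2.1 = 0 := by
          apply Subtype.ext; simpa using ha
        rw [← hz]
      rw [mul_one, hpz]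
      exact hp.symm
    · apply continuous_quot_lift
      exact continuous_quot_mk.comp (Continuous.subtype_mk
        (continuous_quot_mk.comp (continuous_const.prodMk
          (continuous_const.prodMk continuous_subtype_val))) _)
    · exact continuous_quot_lift _ (bwdFun_continuous hHc hcompl hΦcont hΦB)
    · intro w y hy
      show Quot.lift (fwdFun0 (A := A) hΦeq) (fwdFun0_wd hΦeq) (Quot.mk _ w)
          = Quot.mk _ y
      show fwdFun0 (A := A) hΦeq w = Quot.mk _ y
      exact congrArg (Quot.mk _) (Subtype.ext hy.symm)
  · -- stabilizers
    intro w _ g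
    constructor
    · intro hmk
      obtain ⟨h, h1, h2, h3⟩ := aux_mk_eq.mp hmk
      exact ⟨h, (mul_inv_eq_one.mp h1.symm).symm, h3.symm⟩
    · rintro ⟨h, hg, hw⟩
      apply aux_mk_eq.mpr
      refine ⟨h, ?_, by simp, hw.symm⟩
      rw [← hg, mul_inv_cancel]
end

section
/- Let V be a finite-dimensional real vector space, ω a symplectic form on V, H a compact subgroup of GL(V) preserving ω, with Lie algebra 𝔥 := {X ∈ End(V) : exp(tX) ∈ H for all t ∈ ℝ} and moment map zero level set Z := {v ∈ V : ω(Xv, v) = 0 for all X ∈ 𝔥}. Let U := V^H and let W be the ω-orthogonal complement of U. Then for all u ∈ U and w ∈ W, one has u + w ∈ Z if and only if w ∈ Z; equivalently, Z = U ⊕ (Z ∩ W) = {u + w : u ∈ U, w ∈ Z ∩ W}. -/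
section SymplecticSetup

variable (V : Type) [NormedAddCommGroup V] [NormedSpace ℝ V]

/-- The action of an element of a subgroup `H` of `GL(V) = (V →L[ℝ] V)ˣ` on `V`. -/
def glApp (H : Subgroup (V →L[ℝ] V)ˣ) (h : ↥H) (v : V) : V :=
  ((h : (V →L[ℝ] V)ˣ) : V →L[ℝ] V) v

/-- The exponential of a linear operator, as a power series. -/
noncomputable def opExp (X : V →L[ℝ] V) : V →L[ℝ] V :=
  ∑' k : ℕ, ((k.factorial : ℝ)⁻¹) • X ^ k

/-- The Lie algebra `𝔥` of a subgroup `H ≤ GL(V)`: operators whose one-parameter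
flows stay in `H`. -/
def glLieAlg (H : Subgroup (V →L[ℝ] V)ˣ) : Set (V →L[ℝ] V) :=
  {X | ∀ t : ℝ, ∃ u ∈ H, ((u : (V →L[ℝ] V)ˣ) : V →L[ℝ] V) = opExp V (t • X)}

/-- The zero level set `Z` of the moment map `⟨Φ(v), X⟩ = (1/2) ω(Xv, v)` of the linear
`H`-action on `(V, ω)`. -/
def momentZeroV (ω : V →ₗ[ℝ] V →ₗ[ℝ] ℝ) (H : Subgroup (V →L[ℝ] V)ˣ) : Set V :=
  {v | ∀ X ∈ glLieAlg V H, ω (X v) v = 0}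

/-- The set `U = V^H` of `H`-fixed vectors. -/
def fixedSet (H : Subgroup (V →L[ℝ] V)ˣ) : Set V :=
  {v | ∀ h ∈ H, ((h : (V →L[ℝ] V)ˣ) : V →L[ℝ] V) v = v}

/-- The `ω`-orthogonal complement `W` of the fixed subspace `U = V^H`. -/
def omegaPerp (ω : V →ₗ[ℝ] V →ₗ[ℝ] ℝ) (H : Subgroup (V →L[ℝ] V)ˣ) : Set V :=
  {w | ∀ u ∈ fixedSet V H, ω w u = 0}

/-- The set `V_{(L)}` of points of `V` whose `H`-stabilizer is conjugate to `L` in `H`. -/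
def glOrbitType (H : Subgroup (V →L[ℝ] V)ˣ) (L : Subgroup ↥H) : Set V :=
  {v | ∃ g : ↥H, ∀ k : ↥H, glApp V H k v = v ↔ g⁻¹ * k * g ∈ L}

/-- Two points of an `H`-invariant subset `A ⊆ V` are related iff they lie on the same
`H`-orbit. -/
def glRel (H : Subgroup (V →L[ℝ] V)ˣ) (A : Set V) (a b : ↥A) : Prop :=
  ∃ h : ↥H, glApp V H h a.1 = b.1

/-- The quotient `A/H` of a subset `A ⊆ V` by the `H`-action, with the quotient
topology. -/
def GQ (H : Subgroup (V →L[ℝ] V)ˣ) (A : Set V) : Type := Quot (glRel V H A)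

instance (H : Subgroup (V →L[ℝ] V)ˣ) (A : Set V) : TopologicalSpace (GQ V H A) :=
  inferInstanceAs (TopologicalSpace (Quot _))

/-- The subset `(A ∩ V_{(L)})/H` of the quotient `A/H`. -/
def gqPiece (H : Subgroup (V →L[ℝ] V)ˣ) (A : Set V) (L : Subgroup ↥H) :
    Set (GQ V H A) :=
  Quot.mk (glRel V H A) '' {a : ↥A | a.1 ∈ glOrbitType V H L}

/-- The canonical partition of the quotient `A/H`: the connected components of the sets
`(A ∩ V_{(L)})/H`. -/
def gqCanonPieces (H : Subgroup (V →L[ℝ] V)ˣ) (A : Set V) : Set (Set (GQ V H A)) :=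
  {T | ∃ (L : Subgroup ↥H) (x : GQ V H A), x ∈ gqPiece V H A L ∧
        T = connectedComponentIn (gqPiece V H A L) x}

end SymplecticSetup

section helpers
open MeasureTheory TopologicalSpace

variable {V : Type} [NormedAddCommGroup V] [NormedSpace ℝ V] [FiniteDimensional ℝ V]

theorem opExp_eq_exp' (X : V →L[ℝ] V) : opExp V X = NormedSpace.exp X := by
  rw [NormedSpace.exp_eq_tsum ℝ]; rfl

theorem hasDerivAt_opExp_apply (X : V →L[ℝ] V) (v : V) :
    HasDerivAt (fun t : ℝ => opExp V (t • X) v) (X v) 0 := by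
  have h1 : HasDerivAt (fun t : ℝ => NormedSpace.exp (t • X))
      (NormedSpace.exp ((0 : ℝ) • X) * X) 0 := hasDerivAt_exp_smul_const X 0
  have h2 := h1.clm_apply (hasDerivAt_const (0 : ℝ) v)
  simp only [zero_smul, NormedSpace.exp_zero, one_mul, map_zero, add_zero,
    ContinuousLinearMap.mul_apply] at h2
  simpa [opExp_eq_exp'] using h2

theorem lieAlg_apply_fixed_eq_zero {H : Subgroup (V →L[ℝ] V)ˣ}
    {X : V →L[ℝ] V} (hX : X ∈ glLieAlg V H) {u : V} (hu : u ∈ fixedSet V H) :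
    X u = 0 := by
  have hc : ∀ t : ℝ, opExp V (t • X) u = u := by
    intro t
    obtain ⟨g, hg, hval⟩ := hX t
    rw [← hval]
    exact hu g hg
  have h1 := hasDerivAt_opExp_apply X u
  rw [show (fun t : ℝ => opExp V (t • X) u) = fun _ => u from funext hc] at h1
  exact h1.unique (hasDerivAt_const 0 u)

theorem lieAlg_apply_perp {H : Subgroup (V →L[ℝ] V)ˣ} (ω : V →ₗ[ℝ] V →ₗ[ℝ] ℝ)
    (hHω : ∀ h ∈ H, ∀ u v : V,
      ω (((h : (V →L[ℝ] V)ˣ) : V →L[ℝ] V) u) (((h : (V →L[ℝ] V)ˣ) : V →L[ℝ] V) v)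
        = ω u v)
    {X : V →L[ℝ] V} (hX : X ∈ glLieAlg V H) {w : V} (hw : w ∈ omegaPerp V ω H)
    {u : V} (hu : u ∈ fixedSet V H) :
    ω (X w) u = 0 := by
  set φ : V →L[ℝ] ℝ := LinearMap.toContinuousLinearMap (ω.flip u) with hφ
  have hφ_apply : ∀ x : V, φ x = ω x u := fun x => rfl
  have hc : ∀ t : ℝ, φ (opExp V (t • X) w) = 0 := by
    intro t
    obtain ⟨g, hg, hval⟩ := hX t
    rw [← hval, hφ_apply]
    calc ω (((g : (V →L[ℝ] V)ˣ) : V →L[ℝ] V) w) u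
        = ω (((g : (V →L[ℝ] V)ˣ) : V →L[ℝ] V) w)
            (((g : (V →L[ℝ] V)ˣ) : V →L[ℝ] V) u) := by rw [hu g hg]
      _ = ω w u := hHω g hg w u
      _ = 0 := hw u hu
  have h1 := φ.hasFDerivAt.comp_hasDerivAt 0 (hasDerivAt_opExp_apply X w)
  rw [show (⇑φ ∘ fun t : ℝ => opExp V (t • X) w) = fun _ => (0 : ℝ) from funext hc] at h1
  have := h1.unique (hasDerivAt_const 0 (0 : ℝ))
  simpa [hφ_apply] using this

theorem exists_fixed_decomp (ω : V →ₗ[ℝ] V →ₗ[ℝ] ℝ)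
    (H : Subgroup (V →L[ℝ] V)ˣ)
    (hHc : IsCompact (H : Set (V →L[ℝ] V)ˣ))
    (hHω : ∀ h ∈ H, ∀ u v : V,
      ω (((h : (V →L[ℝ] V)ˣ) : V →L[ℝ] V) u) (((h : (V →L[ℝ] V)ˣ) : V →L[ℝ] V) v)
        = ω u v)
    (v : V) :
    ∃ u ∈ fixedSet V H, v - u ∈ omegaPerp V ω H := by
  haveI : CompactSpace ↥H := isCompact_iff_compactSpace.mp hHc
  letI : MeasurableSpace ↥H := borel ↥H
  haveI : BorelSpace ↥H := ⟨rfl⟩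
  haveI : Nonempty ↥H := ⟨1⟩
  set μ : Measure ↥H := Measure.haarMeasure (⊤ : PositiveCompacts ↥H) with hμ
  haveI : IsProbabilityMeasure μ := by
    constructor
    rw [← PositiveCompacts.coe_top (α := ↥H)]
    exact Measure.haarMeasure_self
  set f : ↥H → V := fun h => ((h : (V →L[ℝ] V)ˣ) : V →L[ℝ] V) v with hf_def
  have hf : Continuous f := by
    have h1 : Continuous fun h : ↥H => ((h : (V →L[ℝ] V)ˣ) : V →L[ℝ] V) :=
      Units.continuous_val.comp continuous_subtype_val
    exact h1.clm_apply continuous_const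
  have hfi : Integrable f μ :=
    hf.integrable_of_hasCompactSupport (isClosed_tsupport f).isCompact
  set u₀ : V := ∫ h, f h ∂μ with hu₀_def
  refine ⟨u₀, ?_, ?_⟩
  · intro g hg
    set g' : ↥H := ⟨g, hg⟩ with hg'
    have h1 : ((g : (V →L[ℝ] V)ˣ) : V →L[ℝ] V) u₀
        = ∫ h, ((g : (V →L[ℝ] V)ˣ) : V →L[ℝ] V) (f h) ∂μ :=
      (ContinuousLinearMap.integral_comp_comm _ hfi).symm
    have h2 : ∀ h : ↥H, ((g : (V →L[ℝ] V)ˣ) : V →L[ℝ] V) (f h) = f (g' * h) := by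
      intro h
      simp [hf_def, hg', Units.val_mul]
    rw [h1]
    simp_rw [h2]
    rw [integral_mul_left_eq_self f g']
  · intro u' hu'
    set φ : V →L[ℝ] ℝ := LinearMap.toContinuousLinearMap (ω.flip u') with hφ
    have hφ_apply : ∀ x : V, φ x = ω x u' := fun x => rfl
    have h1 : φ u₀ = ∫ h, φ (f h) ∂μ :=
      (ContinuousLinearMap.integral_comp_comm _ hfi).symm
    have h2 : ∀ h : ↥H, φ (f h) = ω v u' := by
      intro h
      rw [hφ_apply]
      calc ω (((h : (V →L[ℝ] V)ˣ) : V →L[ℝ] V) v) u'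
          = ω (((h : (V →L[ℝ] V)ˣ) : V →L[ℝ] V) v)
              (((h : (V →L[ℝ] V)ˣ) : V →L[ℝ] V) u') := by rw [hu' h h.2]
        _ = ω v u' := hHω h h.2 v u'
    have h3 : φ u₀ = ω v u' := by
      rw [h1]
      simp_rw [h2]
      simp
    have h4 : ω u₀ u' = ω v u' := by
      rw [← h3]
      exact (hφ_apply u₀).symm
    rw [map_sub]
    simp [h4]

end helpers

/-- With `Z` the zero level set of the moment map, `U = V^H` and `W`
the `ω`-orthogonal complement of `U`: for all `u ∈ U` and `w ∈ W` one has
`u + w ∈ Z ↔ w ∈ Z`; equivalently `Z = U ⊕ (Z ∩ W)`. -/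
theorem moment_zero_set_splits_off_fixed_subspace
    (V : Type) [NormedAddCommGroup V] [NormedSpace ℝ V] [FiniteDimensional ℝ V]
    (ω : V →ₗ[ℝ] V →ₗ[ℝ] ℝ)
    (halt : ∀ v : V, ω v v = 0)
    (hnd : ∀ v : V, (∀ w : V, ω v w = 0) → v = 0)
    (H : Subgroup (V →L[ℝ] V)ˣ)
    (hHc : IsCompact (H : Set (V →L[ℝ] V)ˣ))
    (hHω : ∀ h ∈ H, ∀ u v : V,
      ω (((h : (V →L[ℝ] V)ˣ) : V →L[ℝ] V) u) (((h : (V →L[ℝ] V)ˣ) : V →L[ℝ] V) v)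
        = ω u v) :
    (∀ u ∈ fixedSet V H, ∀ w ∈ omegaPerp V ω H,
      (u + w ∈ momentZeroV V ω H ↔ w ∈ momentZeroV V ω H)) ∧
    momentZeroV V ω H =
      {v : V | ∃ u ∈ fixedSet V H, ∃ w ∈ momentZeroV V ω H ∩ omegaPerp V ω H,
        v = u + w} := by

  have key : ∀ u ∈ fixedSet V H, ∀ w ∈ omegaPerp V ω H, ∀ X ∈ glLieAlg V H,
      ω (X (u + w)) (u + w) = ω (X w) w := by
    intro u hu w hw X hX
    have hXu : X u = 0 := lieAlg_apply_fixed_eq_zero hX hu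
    have hperp : ω (X w) u = 0 := lieAlg_apply_perp ω hHω hX hw hu
    have hX' : X (u + w) = X w := by rw [map_add, hXu, zero_add]
    rw [hX', map_add, hperp, zero_add]
  have part1 : ∀ u ∈ fixedSet V H, ∀ w ∈ omegaPerp V ω H,
      (u + w ∈ momentZeroV V ω H ↔ w ∈ momentZeroV V ω H) := by
    intro u hu w hw
    constructor
    · intro h X hX
      rw [← key u hu w hw X hX]
      exact h X hX
    · intro h X hX
      rw [key u hu w hw X hX]
      exact h X hX
  refine ⟨part1, ?_⟩
  ext v
  constructor
  · intro hv
    obtain ⟨u, hu, hw⟩ := exists_fixed_decomp ω H hHc hHω v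
    have hvw : v = u + (v - u) := by abel
    have hwZ : v - u ∈ momentZeroV V ω H := by
      rw [← part1 u hu (v - u) hw, ← hvw]
      exact hv
    exact ⟨u, hu, v - u, ⟨hwZ, hw⟩, hvw⟩
  · rintro ⟨u, hu, w, ⟨hwZ, hwW⟩, rfl⟩
    exact (part1 u hu w hwW).mpr hwZ
end
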